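/- Let G be a graph with a random walk m where each m_x is supported on the closed neighborhood of x (so the support of m_x has diameter at most 2). Let φ: V(G) → ℝ be an α-Lipschitz function with α ≤ 1. Then for every vertex x and every λ > 0, (M e^{λφ})(x) ≤ exp(λ·(Mφ)(x) + (1/2)·λ²·e^{2λ}·α²), where M is the averaging operator (Mf)(x) = Σ_y f(y) m_x(y). -/

import Mathlib

open Finset

/-- A probability vector on a finite set. -/
def IsProbVec {V : Type*} [Fintype V] (m : V → ℝ) : Prop :=
  (∀ x, 0 ≤ m x) ∧ ∑ x, m x = 1

/-- A coupling between two probability vectors. -/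
def IsCoupling {V : Type*} [Fintype V] (m₁ m₂ : V → ℝ) (A : V → V → ℝ) : Prop :=
  (∀ x y, 0 ≤ A x y) ∧ (∀ x, ∑ y, A x y = m₁ x) ∧ (∀ y, ∑ x, A x y = m₂ y)

/-- The L¹-Wasserstein (transportation) distance between two probability vectors,
with respect to the graph metric. -/
noncomputable def Wdist {V : Type*} [Fintype V] (G : SimpleGraph V) (m₁ m₂ : V → ℝ) : ℝ :=
  sInf {s | ∃ A : V → V → ℝ, IsCoupling m₁ m₂ A ∧
    s = ∑ x, ∑ y, A x y * (G.dist x y : ℝ)}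

/-- A random walk on a graph: at each vertex a probability measure supported on
the closed neighborhood. -/
def IsRandomWalk {V : Type*} [Fintype V] (G : SimpleGraph V) (m : V → V → ℝ) : Prop :=
  ∀ x, IsProbVec (m x) ∧ ∀ y, m x y ≠ 0 → y = x ∨ G.Adj x y

/-- Ollivier's Ricci curvature `κ(x,y) = 1 - W(m_x, m_y)/d(x,y)`. -/
noncomputable def ricci {V : Type*} [Fintype V] (G : SimpleGraph V) (m : V → V → ℝ)
    (x y : V) : ℝ :=
  1 - Wdist G (m x) (m y) / (G.dist x y : ℝ)

/-- The averaging operator `(Mf)(x) = ∑_y f(y)·m_x(y)`. -/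
def Mop {V : Type*} [Fintype V] (m : V → V → ℝ) (f : V → ℝ) : V → ℝ :=
  fun x => ∑ y, f y * m x y

/-- one-step exponential moment bound. For an `α`-Lipschitz function `φ`
with `α ≤ 1` and any `λ > 0`,
`(M e^{λφ})(x) ≤ exp(λ·(Mφ)(x) + (1/2)·λ²·e^{2λ}·α²)`. -/
lemma exp_le_quad_of_nonpos {u : ℝ} (hu : u ≤ 0) : Real.exp u ≤ 1 + u + u ^ 2 / 2 := by
  set f : ℝ → ℝ := fun v => 1 + v + v ^ 2 / 2 - Real.exp v with hf
  have hder : ∀ v : ℝ, HasDerivAt f (1 + v - Real.exp v) v := by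
    intro v
    have h1 : HasDerivAt (fun w : ℝ => w ^ 2 / 2) v v := by
      simpa using (hasDerivAt_pow 2 v).div_const 2
    have h2 : HasDerivAt (fun w : ℝ => 1 + w + w ^ 2 / 2) (1 + v) v := by
      exact ((hasDerivAt_id v).const_add 1).add h1
    exact h2.sub (Real.hasDerivAt_exp v)
  have hanti : Antitone f := by
    apply antitone_of_deriv_nonpos
    · intro v; exact (hder v).differentiableAt
    · intro v
      rw [(hder v).deriv]
      have := Real.add_one_le_exp v
      linarith
  have h0 : f 0 = 0 := by simp [hf]
  have := hanti hu
  rw [h0] at this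
  simp only [hf] at this
  linarith

lemma exp_le_quad_of_nonneg {u : ℝ} (hu : 0 ≤ u) :
    Real.exp u ≤ 1 + u + u ^ 2 / 2 * Real.exp u := by
  set g : ℝ → ℝ := fun v => 1 + v + v ^ 2 / 2 * Real.exp v - Real.exp v with hg
  have hder : ∀ v : ℝ,
      HasDerivAt g (1 + (v * Real.exp v + v ^ 2 / 2 * Real.exp v) - Real.exp v) v := by
    intro v
    have h1 : HasDerivAt (fun w : ℝ => w ^ 2 / 2) v v := by
      simpa using (hasDerivAt_pow 2 v).div_const 2
    have h3 : HasDerivAt (fun w : ℝ => w ^ 2 / 2 * Real.exp w)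
        (v * Real.exp v + v ^ 2 / 2 * Real.exp v) v := h1.mul (Real.hasDerivAt_exp v)
    have h2 : HasDerivAt (fun w : ℝ => 1 + w + w ^ 2 / 2 * Real.exp w)
        (1 + (v * Real.exp v + v ^ 2 / 2 * Real.exp v)) v := by
      exact ((hasDerivAt_id v).const_add 1).add h3
    exact h2.sub (Real.hasDerivAt_exp v)
  have hmono : Monotone g := by
    apply monotone_of_deriv_nonneg
    · intro v; exact (hder v).differentiableAt
    · intro v
      rw [(hder v).deriv]
      have h1 : (1 : ℝ) - v - v ^ 2 / 2 ≤ Real.exp (-v) := by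
        have := Real.add_one_le_exp (-v)
        nlinarith [sq_nonneg v]
      have h2 : Real.exp v * (1 - v - v ^ 2 / 2) ≤ Real.exp v * Real.exp (-v) :=
        mul_le_mul_of_nonneg_left h1 (Real.exp_pos v).le
      rw [← Real.exp_add] at h2
      simp at h2
      nlinarith
  have h0 : g 0 = 0 := by simp [hg]
  have := hmono hu
  rw [h0] at this
  simp only [hg] at this
  linarith

lemma exp_quad_bound {l u : ℝ} (hl : 0 < l) (hu : u ≤ 2 * l) :
    Real.exp u ≤ 1 + u + (1 / 2) * u ^ 2 * Real.exp (2 * l) := by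
  have hexp1 : (1 : ℝ) ≤ Real.exp (2 * l) := by
    rw [← Real.exp_zero]; exact Real.exp_le_exp.mpr (by linarith)
  rcases le_or_gt u 0 with h | h
  · have := exp_le_quad_of_nonpos h
    nlinarith [sq_nonneg u]
  · have h1 := exp_le_quad_of_nonneg h.le
    have h2 : Real.exp u ≤ Real.exp (2 * l) := Real.exp_le_exp.mpr hu
    nlinarith [sq_nonneg u, Real.exp_pos u]

theorem averaging_exp_bound {V : Type*} [Fintype V] (G : SimpleGraph V)
    (m : V → V → ℝ) (hm : IsRandomWalk G m)
    (α : ℝ) (hα : α ≤ 1) (φ : V → ℝ)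
    (hφ : ∀ x y : V, |φ x - φ y| ≤ α * (G.dist x y : ℝ))
    (l : ℝ) (hl : 0 < l) (x : V) :
    Mop m (fun y => Real.exp (l * φ y)) x ≤
      Real.exp (l * Mop m φ x + (1 / 2) * l ^ 2 * Real.exp (2 * l) * α ^ 2) := by
  obtain ⟨⟨hμ0, hμ1⟩, hsupp⟩ := hm x
  set μ : V → ℝ := m x with hμ
  set c : ℝ := Mop m φ x with hc
  have hcdef : c = ∑ y, φ y * μ y := rfl
  have hnn : 0 ≤ (1 / 2) * l ^ 2 * Real.exp (2 * l) * α ^ 2 := by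
    positivity
  rcases le_or_gt 0 α with hα0 | hα0
  swap
  · -- α < 0 : support is {x} only
    have hsx : ∀ y, μ y ≠ 0 → y = x := by
      intro y hy
      rcases hsupp y hy with h | h
      · exact h
      · exfalso
        have hd : G.dist x y = 1 := SimpleGraph.dist_eq_one_iff_adj.mpr h
        have := hφ x y
        rw [hd] at this
        have habs : (0:ℝ) ≤ |φ x - φ y| := abs_nonneg _
        push_cast at this
        linarith
    have hμx : μ x = 1 := by
      rw [← hμ1]
      symm
      apply Finset.sum_eq_single x
      · intro y _ hy
        by_contra h
        exact hy (hsx y h)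
      · simp
    have heval : ∀ f : V → ℝ, ∑ y, f y * μ y = f x := by
      intro f
      rw [Finset.sum_eq_single x]
      · rw [hμx]; ring
      · intro y _ hy
        have : μ y = 0 := by
          by_contra h; exact hy (hsx y h)
        rw [this]; ring
      · simp
    show ∑ y, Real.exp (l * φ y) * μ y ≤ _
    rw [heval]
    have : c = φ x := by rw [hcdef, heval]
    rw [this]
    apply Real.exp_le_exp.mpr
    linarith
  -- main case 0 ≤ α
  have hkey : ∀ y, μ y ≠ 0 → |φ y - φ x| ≤ α := by
    intro y hy
    rcases hsupp y hy with rfl | h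
    · simpa using hα0
    · have hd : G.dist y x = 1 := by
        rw [SimpleGraph.dist_comm]; exact SimpleGraph.dist_eq_one_iff_adj.mpr h
      have := hφ y x
      rw [hd] at this
      simpa using this
  -- bounds on c
  have hub : ∀ y, φ y * μ y ≤ (φ x + α) * μ y := by
    intro y
    rcases eq_or_ne (μ y) 0 with h | h
    · simp [h]
    · have := hkey y h
      have h1 : φ y ≤ φ x + α := by
        have := abs_le.mp this
        linarith [this.2]
      exact mul_le_mul_of_nonneg_right h1 (hμ0 y)
  have hlb : ∀ y, (φ x - α) * μ y ≤ φ y * μ y := by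
    intro y
    rcases eq_or_ne (μ y) 0 with h | h
    · simp [h]
    · have := abs_le.mp (hkey y h)
      exact mul_le_mul_of_nonneg_right (by linarith [this.1]) (hμ0 y)
  have hc_ub : c ≤ φ x + α := by
    rw [hcdef]
    calc ∑ y, φ y * μ y ≤ ∑ y, (φ x + α) * μ y := Finset.sum_le_sum fun y _ => hub y
    _ = (φ x + α) * ∑ y, μ y := by rw [Finset.mul_sum]
    _ = φ x + α := by rw [hμ1]; ring
  have hc_lb : φ x - α ≤ c := by
    rw [hcdef]
    calc (φ x - α) = (φ x - α) * ∑ y, μ y := by rw [hμ1]; ring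
    _ = ∑ y, (φ x - α) * μ y := by rw [Finset.mul_sum]
    _ ≤ ∑ y, φ y * μ y := Finset.sum_le_sum fun y _ => hlb y
  -- first moment
  have hmean : ∑ y, (φ y - c) * μ y = 0 := by
    have : ∑ y, (φ y - c) * μ y = (∑ y, φ y * μ y) - c * ∑ y, μ y := by
      rw [Finset.mul_sum, ← Finset.sum_sub_distrib]
      exact Finset.sum_congr rfl fun y _ => by ring
    rw [this, ← hcdef, hμ1]; ring
  -- variance bound
  have hS2 : ∑ y, (φ y - φ x) ^ 2 * μ y ≤ α ^ 2 := by
    calc ∑ y, (φ y - φ x) ^ 2 * μ y ≤ ∑ y, α ^ 2 * μ y := by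
          apply Finset.sum_le_sum
          intro y _
          rcases eq_or_ne (μ y) 0 with h | h
          · simp [h]
          · apply mul_le_mul_of_nonneg_right _ (hμ0 y)
            have := hkey y h
            nlinarith [abs_nonneg (φ y - φ x), sq_abs (φ y - φ x)]
    _ = α ^ 2 := by rw [← Finset.mul_sum, hμ1, mul_one]
  have hmean1 : ∑ y, (φ y - φ x) * μ y = c - φ x := by
    have : ∑ y, (φ y - φ x) * μ y = (∑ y, φ y * μ y) - φ x * ∑ y, μ y := by
      rw [Finset.mul_sum, ← Finset.sum_sub_distrib]
      exact Finset.sum_congr rfl fun y _ => by ring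
    rw [this, ← hcdef, hμ1]; ring
  have hvar : ∑ y, (φ y - c) ^ 2 * μ y ≤ α ^ 2 := by
    have hid : ∑ y, (φ y - c) ^ 2 * μ y =
        (∑ y, (φ y - φ x) ^ 2 * μ y) - 2 * (c - φ x) * (∑ y, (φ y - φ x) * μ y)
          + (c - φ x) ^ 2 * ∑ y, μ y := by
      calc ∑ y, (φ y - c) ^ 2 * μ y
          = ∑ y, ((φ y - φ x) ^ 2 * μ y - 2 * (c - φ x) * ((φ y - φ x) * μ y)
            + (c - φ x) ^ 2 * μ y) := Finset.sum_congr rfl fun y _ => by ring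
      _ = (∑ y, (φ y - φ x) ^ 2 * μ y) - (∑ y, 2 * (c - φ x) * ((φ y - φ x) * μ y))
            + ∑ y, (c - φ x) ^ 2 * μ y := by
          rw [Finset.sum_add_distrib, Finset.sum_sub_distrib]
      _ = _ := by rw [← Finset.mul_sum, ← Finset.mul_sum]
    rw [hid, hmean1, hμ1]
    nlinarith [sq_nonneg (c - φ x)]
  -- pointwise exponential bound
  have hpt : ∀ y, Real.exp (l * φ y) * μ y ≤
      Real.exp (l * c) * ((1 + l * (φ y - c) + (1 / 2) * l ^ 2 * Real.exp (2 * l)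
        * (φ y - c) ^ 2) * μ y) := by
    intro y
    rcases eq_or_ne (μ y) 0 with h | h
    · simp [h]
    · have hd : φ y - c ≤ 2 := by
        have := abs_le.mp (hkey y h)
        linarith [this.2, hc_lb]
      have hu : l * (φ y - c) ≤ 2 * l := by nlinarith
      have hb := exp_quad_bound hl hu
      have he : Real.exp (l * φ y) = Real.exp (l * c) * Real.exp (l * (φ y - c)) := by
        rw [← Real.exp_add]; ring_nf
      rw [he]
      have h2 : Real.exp (l * (φ y - c)) * μ y ≤
          (1 + l * (φ y - c) + (1 / 2) * l ^ 2 * Real.exp (2 * l) * (φ y - c) ^ 2) * μ y := by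
        apply mul_le_mul_of_nonneg_right _ (hμ0 y)
        calc Real.exp (l * (φ y - c)) ≤ 1 + l * (φ y - c)
            + (1 / 2) * (l * (φ y - c)) ^ 2 * Real.exp (2 * l) := hb
        _ = 1 + l * (φ y - c) + (1 / 2) * l ^ 2 * Real.exp (2 * l) * (φ y - c) ^ 2 := by ring
      calc Real.exp (l * c) * Real.exp (l * (φ y - c)) * μ y
          = Real.exp (l * c) * (Real.exp (l * (φ y - c)) * μ y) := by ring
      _ ≤ _ := mul_le_mul_of_nonneg_left h2 (Real.exp_pos _).le
  -- sum up
  have hsum : Mop m (fun y => Real.exp (l * φ y)) x ≤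
      Real.exp (l * c) * (1 + (1 / 2) * l ^ 2 * Real.exp (2 * l) * α ^ 2) := by
    show ∑ y, Real.exp (l * φ y) * μ y ≤ _
    calc ∑ y, Real.exp (l * φ y) * μ y
        ≤ ∑ y, Real.exp (l * c) * ((1 + l * (φ y - c) + (1 / 2) * l ^ 2 * Real.exp (2 * l)
          * (φ y - c) ^ 2) * μ y) := Finset.sum_le_sum fun y _ => hpt y
    _ = Real.exp (l * c) * ∑ y, (μ y + l * ((φ y - c) * μ y)
          + (1 / 2) * l ^ 2 * Real.exp (2 * l) * ((φ y - c) ^ 2 * μ y)) := by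
        rw [← Finset.mul_sum]
        congr 1
        exact Finset.sum_congr rfl fun y _ => by ring
    _ = Real.exp (l * c) * (1 + l * 0
          + (1 / 2) * l ^ 2 * Real.exp (2 * l) * ∑ y, (φ y - c) ^ 2 * μ y) := by
        rw [Finset.sum_add_distrib, Finset.sum_add_distrib, ← Finset.mul_sum, ← Finset.mul_sum,
          hμ1, hmean]
    _ ≤ Real.exp (l * c) * (1 + (1 / 2) * l ^ 2 * Real.exp (2 * l) * α ^ 2) := by
        apply mul_le_mul_of_nonneg_left _ (Real.exp_pos _).le
        have h3 : (1 / 2) * l ^ 2 * Real.exp (2 * l) * (∑ y, (φ y - c) ^ 2 * μ y)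
            ≤ (1 / 2) * l ^ 2 * Real.exp (2 * l) * α ^ 2 := by
          apply mul_le_mul_of_nonneg_left hvar
          positivity
        linarith
  calc Mop m (fun y => Real.exp (l * φ y)) x
      ≤ Real.exp (l * c) * (1 + (1 / 2) * l ^ 2 * Real.exp (2 * l) * α ^ 2) := hsum
  _ ≤ Real.exp (l * c) * Real.exp ((1 / 2) * l ^ 2 * Real.exp (2 * l) * α ^ 2) := by
      apply mul_le_mul_of_nonneg_left _ (Real.exp_pos _).le
      have := Real.add_one_le_exp ((1 / 2) * l ^ 2 * Real.exp (2 * l) * α ^ 2)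
      linarith
  _ = Real.exp (l * c + (1 / 2) * l ^ 2 * Real.exp (2 * l) * α ^ 2) := by
      rw [← Real.exp_add]
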